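/- If c_i^{n−2} > 0 and c_i^n > 0 for every i = 1,…,M, then for every Δt > 0 the MPMS2 linear system has a unique solution c^{n+1} ∈ ℝ^M, and this solution satisfies c_i^{n+1} > 0 for every i; that is, the MPMS2 scheme is unconditionally positivity-preserving. -/

import Mathlib

open Finset Matrix

section MPMS2Aux

variable {M : ℕ}

/-- The system matrix of the MPMS2 scheme. -/
noncomputable def Amat (a : ℝ) (p d : Fin M → Fin M → ℝ) (σ : Fin M → ℝ) :
    Matrix (Fin M) (Fin M) ℝ :=
  fun i j => (if i = j then 1 + a * ∑ k, d i k / σ i else 0) - a * p i j / σ j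

lemma Amat_mulVec (a : ℝ) (p d : Fin M → Fin M → ℝ) (σ : Fin M → ℝ)
    (c : Fin M → ℝ) (i : Fin M) :
    (Amat a p d σ).mulVec c i
      = c i + a * (∑ j, d i j * c i / σ i) - a * ∑ j, p i j * c j / σ j := by
  unfold Amat
  simp only [Matrix.mulVec, dotProduct, sub_mul, ite_mul, one_mul, zero_mul,
    Finset.sum_sub_distrib, Finset.sum_ite_eq, Finset.mem_univ, if_true]
  have h1 : ∑ j, a * p i j / σ j * c j = a * ∑ j, p i j * c j / σ j := by
    rw [Finset.mul_sum]; exact Finset.sum_congr rfl fun j _ => by ring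
  have h2 : a * (∑ j, d i j * c i / σ i) = a * (∑ k, d i k / σ i) * c i := by
    simp only [Finset.mul_sum, Finset.sum_mul]
    exact Finset.sum_congr rfl fun j _ => by ring
  rw [h1]
  linarith [h2]

lemma Amat_offdiag_nonpos {a : ℝ} (ha : 0 ≤ a) {p d : Fin M → Fin M → ℝ}
    (hp : ∀ i j, 0 ≤ p i j) {σ : Fin M → ℝ} (hσ : ∀ i, 0 < σ i)
    {i j : Fin M} (hij : i ≠ j) : Amat a p d σ i j ≤ 0 := by
  unfold Amat
  rw [if_neg hij]
  have : 0 ≤ a * p i j / σ j := div_nonneg (mul_nonneg ha (hp i j)) (hσ j).le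
  linarith

lemma Amat_colsum {a : ℝ} {p d : Fin M → Fin M → ℝ} (hpd : ∀ i j, p i j = d j i)
    {σ : Fin M → ℝ} (j : Fin M) : ∑ i, Amat a p d σ i j = 1 := by
  unfold Amat
  rw [Finset.sum_sub_distrib]
  rw [Finset.sum_ite_eq' Finset.univ j fun i => 1 + a * ∑ k, d i k / σ i]
  simp only [Finset.mem_univ, if_true]
  have : ∑ i, a * p i j / σ j = a * ∑ k, d j k / σ j := by
    rw [Finset.mul_sum]
    exact Finset.sum_congr rfl fun i _ => by rw [hpd]; ring
  linarith

lemma Amat_core {a : ℝ} (ha : 0 ≤ a) {p d : Fin M → Fin M → ℝ}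
    (hp : ∀ i j, 0 ≤ p i j) (hpd : ∀ i j, p i j = d j i)
    {σ : Fin M → ℝ} (hσ : ∀ i, 0 < σ i)
    (c : Fin M → ℝ) (S : Finset (Fin M))
    (hneg : ∀ j ∈ S, c j ≤ 0) (hpos : ∀ j ∉ S, 0 ≤ c j) :
    ∑ i ∈ S, (Amat a p d σ).mulVec c i ≤ ∑ j ∈ S, c j := by
  have key : ∑ i ∈ S, (Amat a p d σ).mulVec c i
      = ∑ j, (∑ i ∈ S, Amat a p d σ i j) * c j := by
    simp only [Matrix.mulVec, dotProduct]
    rw [Finset.sum_comm]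
    exact Finset.sum_congr rfl fun j _ => (Finset.sum_mul _ _ _).symm
  rw [key, ← Finset.sum_add_sum_compl S fun j => (∑ i ∈ S, Amat a p d σ i j) * c j]
  have h1 : ∀ j ∈ S, (∑ i ∈ S, Amat a p d σ i j) * c j ≤ c j := by
    intro j hj
    have hge : (1:ℝ) ≤ ∑ i ∈ S, Amat a p d σ i j := by
      have hsplit := Finset.sum_add_sum_compl S fun i => Amat a p d σ i j
      have hc : ∑ i ∈ Sᶜ, Amat a p d σ i j ≤ 0 :=
        Finset.sum_nonpos fun i hi => Amat_offdiag_nonpos ha hp hσ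
          (by intro h; subst h; exact (Finset.mem_compl.mp hi) hj)
      have hcol := Amat_colsum (a := a) hpd (σ := σ) j
      linarith [hsplit, hcol]
    calc (∑ i ∈ S, Amat a p d σ i j) * c j ≤ 1 * c j :=
          mul_le_mul_of_nonpos_right hge (hneg j hj)
      _ = c j := one_mul _
  have h2 : ∀ j ∈ Sᶜ, (∑ i ∈ S, Amat a p d σ i j) * c j ≤ 0 := by
    intro j hj
    have hj' := Finset.mem_compl.mp hj
    have hs : ∑ i ∈ S, Amat a p d σ i j ≤ 0 :=
      Finset.sum_nonpos fun i hi => Amat_offdiag_nonpos ha hp hσ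
        (by intro h; subst h; exact hj' hi)
    have := mul_nonneg (neg_nonneg.mpr hs) (hpos j hj')
    nlinarith
  have := add_le_add (Finset.sum_le_sum h1) (Finset.sum_nonpos h2)
  linarith

end MPMS2Aux

/-- Unconditional positivity of the MPMS2 scheme: for positive data `c^{n−2}, c^n`
and any `Δt > 0`, the MPMS2 linear system has a unique solution and this solution
is entrywise positive. -/
theorem mpms2_unconditionally_positive
    (M : ℕ) (hM : 1 ≤ M) (Δt : ℝ) (hΔt : 0 < Δt)
    (cnm2 cn : Fin M → ℝ)
    (hcnm2 : ∀ i, 0 < cnm2 i) (hcn : ∀ i, 0 < cn i)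
    (p d : Fin M → Fin M → ℝ)
    (hp : ∀ i j, 0 ≤ p i j) (hd : ∀ i j, 0 ≤ d i j)
    (hpd : ∀ i j, p i j = d j i)
    (σ : Fin M → ℝ) (hσ : ∀ i, 0 < σ i) :
    (∃! c : Fin M → ℝ, ∀ i,
        c i = (1/4) * cnm2 i + (3/4) * cn i +
          (3/2) * Δt * (∑ j, p i j * c j / σ j - ∑ j, d i j * c i / σ i)) ∧
    (∀ c : Fin M → ℝ,
      (∀ i, c i = (1/4) * cnm2 i + (3/4) * cn i +
        (3/2) * Δt * (∑ j, p i j * c j / σ j - ∑ j, d i j * c i / σ i)) →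
      ∀ i, 0 < c i) := by
  set a : ℝ := (3/2) * Δt with ha_def
  have ha : 0 ≤ a := by positivity
  set b : Fin M → ℝ := fun i => (1/4) * cnm2 i + (3/4) * cn i with hb_def
  have hb : ∀ i, 0 < b i := by
    intro i
    have := hcnm2 i; have := hcn i
    simp only [hb_def]; linarith
  -- equivalence between the scheme equations and the linear system
  have equiv : ∀ c : Fin M → ℝ,
      (∀ i, c i = (1/4) * cnm2 i + (3/4) * cn i +
        a * (∑ j, p i j * c j / σ j - ∑ j, d i j * c i / σ i)) ↔
      (Amat a p d σ).mulVec c = b := by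
    intro c
    constructor
    · intro h
      funext i
      rw [Amat_mulVec]
      have hi := h i
      have hexp : a * (∑ j, p i j * c j / σ j - ∑ j, d i j * c i / σ i)
          = a * (∑ j, p i j * c j / σ j) - a * (∑ j, d i j * c i / σ i) := by ring
      simp only [hb_def]
      linarith [hi, hexp]
    · intro h i
      have hi := congrFun h i
      rw [Amat_mulVec] at hi
      have hexp : a * (∑ j, p i j * c j / σ j - ∑ j, d i j * c i / σ i)
          = a * (∑ j, p i j * c j / σ j) - a * (∑ j, d i j * c i / σ i) := by ring
      simp only [hb_def] at hi
      linarith [hi, hexp]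
  -- positivity of any solution of the linear system
  have hposall : ∀ c : Fin M → ℝ, (Amat a p d σ).mulVec c = b → ∀ i, 0 < c i := by
    intro c hc
    by_contra hcon
    push_neg at hcon
    obtain ⟨i, hi⟩ := hcon
    set S : Finset (Fin M) := Finset.univ.filter (fun j => c j ≤ 0) with hS
    have hiS : i ∈ S := by simp [hS, hi]
    have hle := Amat_core ha hp hpd hσ c S
      (fun j hj => (Finset.mem_filter.mp hj).2)
      (fun j hj => le_of_not_ge fun h =>
        hj (Finset.mem_filter.mpr ⟨Finset.mem_univ j, h⟩))
    rw [hc] at hle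
    have h1 : 0 < ∑ j ∈ S, b j := Finset.sum_pos (fun j _ => hb j) ⟨i, hiS⟩
    have h2 : ∑ j ∈ S, c j ≤ 0 :=
      Finset.sum_nonpos fun j hj => (Finset.mem_filter.mp hj).2
    linarith
  -- injectivity of the linear system
  have hker : ∀ e : Fin M → ℝ, (Amat a p d σ).mulVec e = 0 → ∀ i, 0 ≤ e i := by
    intro e he
    by_contra hcon
    push_neg at hcon
    obtain ⟨i, hi⟩ := hcon
    set S : Finset (Fin M) := Finset.univ.filter (fun j => e j < 0) with hS
    have hiS : i ∈ S := by simp [hS, hi]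
    have hle := Amat_core ha hp hpd hσ e S
      (fun j hj => le_of_lt (Finset.mem_filter.mp hj).2)
      (fun j hj => le_of_not_gt fun h =>
        hj (Finset.mem_filter.mpr ⟨Finset.mem_univ j, h⟩))
    rw [he] at hle
    simp only [Pi.zero_apply, Finset.sum_const_zero] at hle
    have : ∑ j ∈ S, e j < 0 :=
      Finset.sum_neg (fun j hj => (Finset.mem_filter.mp hj).2) ⟨i, hiS⟩
    linarith
  have hinj : Function.Injective (Amat a p d σ).mulVec := by
    intro x y hxy
    have hz1 : (Amat a p d σ).mulVec (x - y) = 0 := by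
      rw [Matrix.mulVec_sub, hxy, sub_self]
    have hz2 : (Amat a p d σ).mulVec (y - x) = 0 := by
      rw [Matrix.mulVec_sub, hxy, sub_self]
    have h1 := hker (x - y) hz1
    have h2 := hker (y - x) hz2
    funext i
    have := h1 i; have := h2 i
    simp only [Pi.sub_apply] at *
    linarith
  -- surjectivity via finite dimensionality
  have hsurj : Function.Surjective (Amat a p d σ).mulVec := by
    have hinj' : Function.Injective ((Amat a p d σ).mulVecLin) := by
      simpa [Matrix.coe_mulVecLin] using hinj
    have := LinearMap.surjective_of_injective hinj'
    simpa [Matrix.coe_mulVecLin] using this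
  obtain ⟨c, hc⟩ := hsurj b
  refine ⟨⟨c, ?_, ?_⟩, ?_⟩
  · exact (equiv c).mpr hc
  · intro y hy
    exact hinj (((equiv y).mp hy).trans hc.symm)
  · intro c' hc' i
    exact hposall c' ((equiv c').mp hc') i
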